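/- Let a ∈ ℝ and b ∈ ℝ ∪ {+∞} with a < b, let m : [a,b) → ℝ be strictly increasing, continuous from the right at a, differentiable on (a,b) with derivative bounded on every closed subinterval [a',b'] ⊂ (a,b), and satisfying m(x) → +∞ as x → b⁻. Let f : [a,b) → [0,∞) be Riemann integrable on compact subintervals with sup_{[a,b)} f < +∞ and f(x) → 0 as x → b⁻. Then for all a ≤ r < R with R ∈ (a,b), one has A_m(r,R;f) ≤ A_m(a,R; m^→[f]). -/

import Mathlib

open MeasureTheory Set Filter

/-- The integral average `A_m(r,R;f) = (1/(m R - m r)) ∫_r^R f dm`, where the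
Riemann–Stieltjes integral `∫_r^R f dm` is expressed as `∫_r^R f(x) m'(x) dx`
(valid since `m` is differentiable with locally bounded derivative). -/
noncomputable def intAvg (m f : ℝ → ℝ) (r R : ℝ) : ℝ :=
  (m R - m r)⁻¹ * ∫ x in r..R, f x * deriv m x

/-- The right maximization `m^→[f](r) = sup_{x ∈ [r,b)} f x`, for `b ∈ ℝ ∪ {+∞}`. -/
noncomputable def rightMax (b : EReal) (f : ℝ → ℝ) (r : ℝ) : ℝ :=
  sSup (f '' {x : ℝ | r ≤ x ∧ (x : EReal) < b})

/-- The filter of real numbers tending to `b ∈ ℝ ∪ {+∞}` from the left. -/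
noncomputable def toBFilter (b : EReal) : Filter ℝ :=
  Filter.comap (Real.toEReal) (nhdsWithin b (Set.Iio b))

theorem stmt_6 (a : ℝ) (b : EReal) (hab : (a : EReal) < b) (m f : ℝ → ℝ)
    (hm_mono : StrictMonoOn m {x : ℝ | a ≤ x ∧ (x : EReal) < b})
    (hm_rc : ContinuousWithinAt m (Set.Ici a) a)
    (hm_diff : ∀ x : ℝ, a < x → (x : EReal) < b → DifferentiableAt ℝ m x)
    (hm_bdd : ∀ a' b' : ℝ, a < a' → a' ≤ b' → (b' : EReal) < b →
      ∃ C : ℝ, ∀ x ∈ Set.Icc a' b', |deriv m x| ≤ C)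
    (hm_top : Filter.Tendsto m (toBFilter b) Filter.atTop)
    (hf_nonneg : ∀ x : ℝ, a ≤ x → (x : EReal) < b → 0 ≤ f x)
    (hf_int : ∀ c d : ℝ, a ≤ c → c ≤ d → (d : EReal) < b →
      IntervalIntegrable f MeasureTheory.volume c d)
    (hf_bdd : ∃ C : ℝ, ∀ x : ℝ, a ≤ x → (x : EReal) < b → f x ≤ C)
    (hf_zero : Filter.Tendsto f (toBFilter b) (nhds 0)) :
    ∀ r R : ℝ, a ≤ r → r < R → (R : EReal) < b →
      intAvg m f r R ≤ intAvg m (rightMax b f) a R := by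
  obtain ⟨C, hC⟩ := hf_bdd
  intro r R har hrR hRb
  have haR : a < R := har.trans_lt hrR
  have hRa : a ≤ R := haR.le
  have hS : ∀ x : ℝ, x ≤ R → (x : EReal) < b := fun x hx =>
    (EReal.coe_le_coe_iff.2 hx).trans_lt hRb
  set F := rightMax b f with hFdef
  have hC0 : 0 ≤ C := le_trans (hf_nonneg a le_rfl hab) (hC a le_rfl hab)
  have hbdd : ∀ x : ℝ, a ≤ x → BddAbove (f '' {y : ℝ | x ≤ y ∧ (y : EReal) < b}) := by
    intro x hx
    refine ⟨C, ?_⟩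
    rintro v ⟨y, ⟨hxy, hyb⟩, rfl⟩
    exact hC y (hx.trans hxy) hyb
  have hmemF : ∀ x : ℝ, (x : EReal) < b → f x ∈ f '' {y : ℝ | x ≤ y ∧ (y : EReal) < b} :=
    fun x hx => ⟨x, ⟨le_rfl, hx⟩, rfl⟩
  have hfF : ∀ x : ℝ, a ≤ x → (x : EReal) < b → f x ≤ F x :=
    fun x hx hxb => le_csSup (hbdd x hx) (hmemF x hxb)
  have hF0 : ∀ x : ℝ, a ≤ x → (x : EReal) < b → 0 ≤ F x :=
    fun x hx hxb => (hf_nonneg x hx hxb).trans (hfF x hx hxb)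
  have hFC : ∀ x : ℝ, a ≤ x → (x : EReal) < b → F x ≤ C := by
    intro x hx hxb
    refine csSup_le ⟨f x, hmemF x hxb⟩ ?_
    rintro v ⟨y, ⟨hxy, hyb⟩, rfl⟩
    exact hC y (hx.trans hxy) hyb
  have hFanti : ∀ x y : ℝ, a ≤ x → x ≤ y → (y : EReal) < b → F y ≤ F x := by
    intro x y hax hxy hyb
    refine csSup_le_csSup (hbdd x hax) ⟨f y, hmemF y hyb⟩ (Set.image_mono (f := f) ?_)
    rintro z ⟨hz1, hz2⟩
    exact ⟨hxy.trans hz1, hz2⟩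
  have hmMono : MonotoneOn m {x : ℝ | a ≤ x ∧ (x : EReal) < b} := hm_mono.monotoneOn
  have hmcont : ContinuousOn m (Set.Icc a R) := by
    intro x hx
    rcases hx.1.eq_or_lt with h | h
    · subst h; exact hm_rc.mono Set.Icc_subset_Ici_self
    · exact ((hm_diff x h (hS x hx.2)).continuousAt).continuousWithinAt
  have hderiv0 : ∀ x ∈ Set.Ioc a R, 0 ≤ deriv m x := by
    intro x hx
    have hd := (hm_diff x hx.1 (hS x hx.2)).hasDerivAt
    have h1 : Tendsto (slope m x) (nhdsWithin x (Set.Iio x)) (nhds (deriv m x)) :=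
      (hasDerivAt_iff_tendsto_slope.1 hd).mono_left
        (nhdsWithin_mono x fun y hy => ne_of_lt hy)
    refine ge_of_tendsto h1 ?_
    filter_upwards [Ioo_mem_nhdsLT_of_mem (⟨hx.1, le_rfl⟩ : x ∈ Set.Ioc a x)] with y hy
    rw [slope_def_field]
    have hmy : m y ≤ m x :=
      hmMono ⟨hy.1.le, hS y (hy.2.le.trans hx.2)⟩ ⟨hx.1.le, hS x hx.2⟩ hy.2.le
    exact div_nonneg_of_nonpos (sub_nonpos.2 hmy) (sub_nonpos.2 hy.2.le)
  have hmd_int : IntegrableOn (deriv m) (Set.Ioc a R) volume :=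
    intervalIntegral.integrableOn_deriv_of_nonneg hmcont
      (fun x hx => (hm_diff x hx.1 (hS x hx.2.le)).hasDerivAt)
      (fun x hx => hderiv0 x ⟨hx.1, hx.2.le⟩)
  have hftc : ∀ c d : ℝ, a ≤ c → c ≤ d → d ≤ R → ∫ x in c..d, deriv m x = m d - m c := by
    intro c d hac hcd hdR
    refine intervalIntegral.integral_eq_sub_of_hasDeriv_right_of_le hcd
      (hmcont.mono (Set.Icc_subset_Icc hac hdR))
      (fun x hx => ((hm_diff x (hac.trans_lt hx.1) (hS x (hx.2.le.trans hdR))).hasDerivAt).hasDerivWithinAt)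
      ((intervalIntegrable_iff_integrableOn_Ioc_of_le hcd).2
        (hmd_int.mono_set (Set.Ioc_subset_Ioc hac hdR)))
  set G : ℝ → ℝ := fun x => F (min (max x a) R) with hGdef
  have hclamp : ∀ x : ℝ, a ≤ min (max x a) R ∧ min (max x a) R ≤ R :=
    fun x => ⟨le_min (le_max_right x a) hRa, min_le_right _ _⟩
  have hGanti : Antitone G := fun x y hxy =>
    hFanti _ _ (hclamp x).1 (min_le_min (max_le_max hxy le_rfl) le_rfl) (hS _ (hclamp y).2)
  have hGmeas : Measurable G := hGanti.measurable
  have hGF : ∀ x ∈ Set.Icc a R, G x = F x := by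
    intro x hx
    rw [hGdef]
    simp only [max_eq_left hx.1, min_eq_left hx.2]
  have hdC_int : IntegrableOn (fun x => C * deriv m x) (Set.Ioc a R) volume :=
    hmd_int.const_mul C
  have hGd_int : IntegrableOn (fun x => G x * deriv m x) (Set.Ioc a R) volume := by
    refine Integrable.mono' hdC_int ((hGmeas.mul (measurable_deriv m)).aestronglyMeasurable) ?_
    refine (ae_restrict_iff' measurableSet_Ioc).2 (Filter.Eventually.of_forall ?_)
    intro x hx
    have hx' : x ∈ Set.Icc a R := ⟨hx.1.le, hx.2⟩
    have h0 := hderiv0 x hx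
    rw [Real.norm_eq_abs, abs_mul,
      abs_of_nonneg (by rw [hGF x hx']; exact hF0 x hx'.1 (hS x hx'.2)), abs_of_nonneg h0]
    exact mul_le_mul_of_nonneg_right (by rw [hGF x hx']; exact hFC x hx'.1 (hS x hx'.2)) h0
  have hFd_int : IntegrableOn (fun x => F x * deriv m x) (Set.Ioc a R) volume :=
    hGd_int.congr_fun (fun x hx => by dsimp only; rw [hGF x ⟨hx.1.le, hx.2⟩]) measurableSet_Ioc
  have hfd_int : IntegrableOn (fun x => f x * deriv m x) (Set.Ioc r R) volume := by
    refine Integrable.mono' (hdC_int.mono_set (Set.Ioc_subset_Ioc har le_rfl))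
      (((hf_int r R har hrR.le hRb).1.aestronglyMeasurable).mul
        (measurable_deriv m).aestronglyMeasurable) ?_
    refine (ae_restrict_iff' measurableSet_Ioc).2 (Filter.Eventually.of_forall ?_)
    intro x hx
    have hx' : x ∈ Set.Ioc a R := ⟨har.trans_lt hx.1, hx.2⟩
    have h0 := hderiv0 x hx'
    rw [Real.norm_eq_abs, abs_mul, abs_of_nonneg (hf_nonneg x hx'.1.le (hS x hx'.2)),
      abs_of_nonneg h0]
    exact mul_le_mul_of_nonneg_right (hC x hx'.1.le (hS x hx'.2)) h0
  have hrb : (r : EReal) < b := hS r hrR.le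
  have hFr0 : 0 ≤ F r := hF0 r har hrb
  have hIf_le_J : (∫ x in Set.Ioc r R, f x * deriv m x) ≤ ∫ x in Set.Ioc r R, F x * deriv m x := by
    refine setIntegral_mono_on hfd_int (hFd_int.mono_set (Set.Ioc_subset_Ioc har le_rfl))
      measurableSet_Ioc ?_
    intro x hx
    exact mul_le_mul_of_nonneg_right (hfF x (har.trans hx.1.le) (hS x hx.2))
      (hderiv0 x ⟨har.trans_lt hx.1, hx.2⟩)
  have hK : F r * (m r - m a) ≤ ∫ x in Set.Ioc a r, F x * deriv m x := by
    have h1 : (∫ x in Set.Ioc a r, F r * deriv m x) ≤ ∫ x in Set.Ioc a r, F x * deriv m x := by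
      refine setIntegral_mono_on
        ((hmd_int.mono_set (Set.Ioc_subset_Ioc le_rfl hrR.le)).const_mul _)
        (hFd_int.mono_set (Set.Ioc_subset_Ioc le_rfl hrR.le)) measurableSet_Ioc ?_
      intro x hx
      exact mul_le_mul_of_nonneg_right (hFanti x r hx.1.le hx.2 hrb)
        (hderiv0 x ⟨hx.1, hx.2.trans hrR.le⟩)
    calc F r * (m r - m a) = ∫ x in Set.Ioc a r, F r * deriv m x := by
          rw [MeasureTheory.integral_const_mul, ← intervalIntegral.integral_of_le har,
            hftc a r le_rfl har hrR.le]
      _ ≤ _ := h1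
  have hJ : (∫ x in Set.Ioc r R, F x * deriv m x) ≤ F r * (m R - m r) := by
    have h1 : (∫ x in Set.Ioc r R, F x * deriv m x) ≤ ∫ x in Set.Ioc r R, F r * deriv m x := by
      refine setIntegral_mono_on (hFd_int.mono_set (Set.Ioc_subset_Ioc har le_rfl))
        ((hmd_int.mono_set (Set.Ioc_subset_Ioc har le_rfl)).const_mul _) measurableSet_Ioc ?_
      intro x hx
      exact mul_le_mul_of_nonneg_right (hFanti r x har hx.1.le (hS x hx.2))
        (hderiv0 x ⟨har.trans_lt hx.1, hx.2⟩)
    calc (∫ x in Set.Ioc r R, F x * deriv m x) ≤ ∫ x in Set.Ioc r R, F r * deriv m x := h1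
      _ = F r * (m R - m r) := by
          rw [MeasureTheory.integral_const_mul, ← intervalIntegral.integral_of_le hrR.le,
            hftc r R har hrR.le le_rfl]
  have hmem : ∀ x : ℝ, a ≤ x → x ≤ R → x ∈ {x : ℝ | a ≤ x ∧ (x : EReal) < b} :=
    fun x h1 h2 => ⟨h1, hS x h2⟩
  have hw1 : 0 ≤ m r - m a := sub_nonneg.2 (hmMono (hmem a le_rfl hRa) (hmem r har hrR.le) har)
  have hw2 : 0 < m R - m r := sub_pos.2 (hm_mono (hmem r har hrR.le) (hmem R hRa le_rfl) hrR)
  have hW : 0 < m R - m a := sub_pos.2 (hm_mono (hmem a le_rfl hRa) (hmem R hRa le_rfl) haR)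
  have hsplit : (∫ x in a..R, F x * deriv m x)
      = (∫ x in Set.Ioc a r, F x * deriv m x) + ∫ x in Set.Ioc r R, F x * deriv m x := by
    rw [← intervalIntegral.integral_add_adjacent_intervals
      ((intervalIntegrable_iff_integrableOn_Ioc_of_le har).2
        (hFd_int.mono_set (Set.Ioc_subset_Ioc le_rfl hrR.le)))
      ((intervalIntegrable_iff_integrableOn_Ioc_of_le hrR.le).2
        (hFd_int.mono_set (Set.Ioc_subset_Ioc har le_rfl)))]
    rw [intervalIntegral.integral_of_le har, intervalIntegral.integral_of_le hrR.le]
  simp only [intAvg, ← hFdef]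
  rw [hsplit, intervalIntegral.integral_of_le hrR.le, inv_mul_eq_div, inv_mul_eq_div,
    div_le_div_iff₀ hw2 hW]
  nlinarith [mul_nonneg (sub_nonneg.2 hIf_le_J) hW.le, mul_nonneg (sub_nonneg.2 hJ) hw1,
    mul_nonneg (sub_nonneg.2 hK) hw2.le]
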